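/- For a 2×2 complex matrix A with eigenvalues λ₁, λ₂, the numerical range W(A) is the closed elliptical disk with foci λ₁, λ₂ and minor axis of length √(tr(A*A) − |λ₁|² − |λ₂|²). -/

import Mathlib

open Matrix

set_option maxHeartbeats 2000000

/-- The numerical range of a `2 × 2` complex matrix. -/
noncomputable def numRange (M : Matrix (Fin 2) (Fin 2) ℂ) : Set ℂ :=
  {z | ∃ x : EuclideanSpace ℂ (Fin 2), ‖x‖ = 1 ∧
    z = inner (𝕜 := ℂ) x (Matrix.toEuclideanCLM (𝕜 := ℂ) M x)}


private lemma abs_le_of_sq_le' {t : ℂ} {c : ℝ} (hc : 0 ≤ c)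
    (h : ‖t‖ ^ 2 ≤ c ^ 2) : ‖t‖ ≤ c := by
  nlinarith [norm_nonneg t]

private lemma lt_of_sq_lt' {s t : ℝ} (ht : 0 ≤ t) (h : s ^ 2 < t ^ 2) : s < t := by
  nlinarith

private lemma sq_abs_re_im (t : ℂ) : ‖t‖ ^ 2 = t.re ^ 2 + t.im ^ 2 := by
  rw [Complex.sq_norm, Complex.normSq_apply]; ring

lemma ellipse_real (a β : ℝ) (ha : 0 ≤ a) (hβ : 0 ≤ β) (z : ℂ) :
    (∃ u : ℝ, u ^ 2 ≤ 1 ∧ ∃ w : ℂ, ‖w‖ ^ 2 = β ^ 2 * (1 - u ^ 2) ∧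
      z = ((a * u : ℝ) : ℂ) + w) ↔
    ‖z - (a : ℂ)‖ + ‖z + (a : ℂ)‖
      ≤ 2 * Real.sqrt (a ^ 2 + β ^ 2) := by
  have hαnn : 0 ≤ Real.sqrt (a ^ 2 + β ^ 2) := Real.sqrt_nonneg _
  have hα2 : Real.sqrt (a ^ 2 + β ^ 2) ^ 2 = a ^ 2 + β ^ 2 :=
    Real.sq_sqrt (by positivity)
  generalize hαdef : Real.sqrt (a ^ 2 + β ^ 2) = α at *
  set X := z.re with hX
  set Y := z.im with hY
  have ha_le : a ≤ α := by nlinarith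
  have hβ_le : β ≤ α := by nlinarith
  have habs1 : ‖z - (a : ℂ)‖ ^ 2 = (X - a) ^ 2 + Y ^ 2 := by
    rw [sq_abs_re_im]; simp [hX, hY]
  have habs2 : ‖z + (a : ℂ)‖ ^ 2 = (X + a) ^ 2 + Y ^ 2 := by
    rw [sq_abs_re_im]; simp [hX, hY]
  have key1 : ∀ u : ℝ, (α ^ 2 - a * X) ^ 2 - ((X - a) ^ 2 + Y ^ 2) * α ^ 2
      = α ^ 2 * β ^ 2 - β ^ 2 * X ^ 2 - α ^ 2 * Y ^ 2 := by
    intro u; linear_combination (α ^ 2 - X ^ 2) * hα2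
  have key2 : (α ^ 2 + a * X) ^ 2 - ((X + a) ^ 2 + Y ^ 2) * α ^ 2
      = α ^ 2 * β ^ 2 - β ^ 2 * X ^ 2 - α ^ 2 * Y ^ 2 := by
    linear_combination (α ^ 2 - X ^ 2) * hα2
  constructor
  · rintro ⟨u, hu, w, hw, hz⟩
    have hwre : w.re ^ 2 + w.im ^ 2 = β ^ 2 * (1 - u ^ 2) := by
      rw [← sq_abs_re_im]; exact hw
    have hre : X = a * u + w.re := by rw [hX, hz]; simp
    have him : Y = w.im := by rw [hY, hz]; simp
    rcases eq_or_lt_of_le hαnn with hα0 | hαpos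
    · -- α = 0 : a = β = 0, z = 0
      have haz : a = 0 := by nlinarith
      have hbz : β = 0 := by nlinarith
      have hww : w.re ^ 2 + w.im ^ 2 = 0 := by rw [hbz] at hwre; linarith [hwre]
      have hwre0 : w.re = 0 := by nlinarith [sq_nonneg w.re, sq_nonneg w.im]
      have hwim0 : w.im = 0 := by nlinarith [sq_nonneg w.re, sq_nonneg w.im]
      have hz0 : z = 0 := by
        apply Complex.ext <;> simp [← hX, ← hY, hre, him, haz, hwre0, hwim0]
      simp [hz0, haz, ← hα0]
    · -- main case
      have hcon : (X - a * u) ^ 2 + Y ^ 2 = β ^ 2 * (1 - u ^ 2) := by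
        rw [hre, him]; ring_nf; ring_nf at hwre; linarith [hwre]
      have hD : α ^ 2 * β ^ 2 - β ^ 2 * X ^ 2 - α ^ 2 * Y ^ 2
          = (a * X - α ^ 2 * u) ^ 2 := by
        linear_combination (-(α ^ 2)) * hcon + (X ^ 2 - α ^ 2 * u ^ 2) * hα2
      have hell : β ^ 2 * X ^ 2 + α ^ 2 * Y ^ 2 ≤ α ^ 2 * β ^ 2 := by
        nlinarith [hD, sq_nonneg (a * X - α ^ 2 * u)]
      have hX2 : X ^ 2 ≤ α ^ 2 := by
        rcases eq_or_lt_of_le hβ with hb0 | hbpos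
        · have hXau : X = a * u := by nlinarith [sq_nonneg (X - a * u), sq_nonneg Y]
          have : X ^ 2 = a ^ 2 * u ^ 2 := by rw [hXau]; ring
          nlinarith [mul_le_mul_of_nonneg_left hu (sq_nonneg a), sq_nonneg β]
        · have h' : β ^ 2 * X ^ 2 ≤ β ^ 2 * α ^ 2 := by
            nlinarith [mul_nonneg (sq_nonneg α) (sq_nonneg Y)]
          exact le_of_mul_le_mul_left h' (by positivity)
      have haX : a * X ≤ α ^ 2 := by
        nlinarith [mul_le_mul_of_nonneg_left hX2 ha]
      have haX' : -(α ^ 2) ≤ a * X := by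
        nlinarith [mul_le_mul_of_nonneg_left hX2 ha]
      have d1 : ‖z - (a : ℂ)‖ ≤ (α ^ 2 - a * X) / α := by
        apply abs_le_of_sq_le'
        · apply div_nonneg (by linarith) (le_of_lt hαpos)
        · rw [habs1, div_pow, le_div_iff₀ (by positivity)]
          linarith [key1 u, hell]
      have d2 : ‖z + (a : ℂ)‖ ≤ (α ^ 2 + a * X) / α := by
        apply abs_le_of_sq_le'
        · apply div_nonneg (by linarith) (le_of_lt hαpos)
        · rw [habs2, div_pow, le_div_iff₀ (by positivity)]
          linarith [key2, hell]
      have hsum : (α ^ 2 - a * X) / α + (α ^ 2 + a * X) / α = 2 * α := by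
        field_simp; ring
      linarith [d1, d2]
  · intro h
    rcases eq_or_lt_of_le hαnn with hα0 | hαpos
    · have haz : a = 0 := by nlinarith
      have hbz : β = 0 := by nlinarith
      have hz0 : z = 0 := by
        have h0 : ‖z‖ + ‖z‖ ≤ 0 := by
          calc ‖z‖ + ‖z‖
              = ‖z - (a : ℂ)‖ + ‖z + (a : ℂ)‖ := by
                rw [haz]; push_cast; ring_nf
            _ ≤ 2 * α := h
            _ = 0 := by rw [← hα0]; ring
        have := norm_nonneg z
        have habs0 : ‖z‖ = 0 := by linarith
        simpa using habs0
      exact ⟨0, by norm_num, 0, by simp [hbz], by simp [hz0]⟩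
    · -- main backward case
      have e1 : (z - (a : ℂ)).re = X - a := by simp [hX]
      have e2 : (z + (a : ℂ)).re = X + a := by simp [hX]
      have h1 : X - a ≤ ‖z - (a : ℂ)‖ := by
        have := Complex.re_le_norm (z - (a : ℂ)); rwa [e1] at this
      have h2 : X + a ≤ ‖z + (a : ℂ)‖ := by
        have := Complex.re_le_norm (z + (a : ℂ)); rwa [e2] at this
      have h1' : a - X ≤ ‖z - (a : ℂ)‖ := by
        have hh := Complex.abs_re_le_norm (z - (a : ℂ)); rw [e1] at hh
        calc a - X ≤ |a - X| := le_abs_self _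
          _ = |X - a| := abs_sub_comm a X
          _ ≤ _ := hh
      have h2' : -a - X ≤ ‖z + (a : ℂ)‖ := by
        have hh := Complex.abs_re_le_norm (z + (a : ℂ)); rw [e2] at hh
        calc -a - X ≤ |(-a) - X| := le_abs_self _
          _ = |X + a| := by rw [abs_sub_comm]; ring_nf
          _ ≤ _ := hh
      have hXle : X ≤ α := by linarith
      have hXge : -α ≤ X := by linarith
      have hell : β ^ 2 * X ^ 2 + α ^ 2 * Y ^ 2 ≤ α ^ 2 * β ^ 2 := by
        by_contra hc
        push_neg at hc
        have t1 : α ^ 2 - a * X < ‖z - (a : ℂ)‖ * α := by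
          apply lt_of_sq_lt' (mul_nonneg (norm_nonneg _) hαnn)
          rw [mul_pow, habs1]
          nlinarith [key1 0]
        have t2 : α ^ 2 + a * X < ‖z + (a : ℂ)‖ * α := by
          apply lt_of_sq_lt' (mul_nonneg (norm_nonneg _) hαnn)
          rw [mul_pow, habs2]
          nlinarith [key2]
        have hs := mul_le_mul_of_nonneg_right h hαnn
        nlinarith [t1, t2, hs]
      have hD0 : 0 ≤ α ^ 2 * β ^ 2 - β ^ 2 * X ^ 2 - α ^ 2 * Y ^ 2 := by linarith
      set s := Real.sqrt (α ^ 2 * β ^ 2 - β ^ 2 * X ^ 2 - α ^ 2 * Y ^ 2) with hsdef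
      have hsnn : 0 ≤ s := Real.sqrt_nonneg _
      have hs2 : s ^ 2 = α ^ 2 * β ^ 2 - β ^ 2 * X ^ 2 - α ^ 2 * Y ^ 2 :=
        Real.sq_sqrt hD0
      have haX : a * X ≤ α ^ 2 := by
        nlinarith [mul_le_mul_of_nonneg_left hXle ha,
          mul_le_mul_of_nonneg_right ha_le hαnn]
      have haX' : -(α ^ 2) ≤ a * X := by
        nlinarith [mul_le_mul_of_nonneg_left hXge ha,
          mul_le_mul_of_nonneg_right ha_le hαnn]
      have hDle : α ^ 2 * β ^ 2 - β ^ 2 * X ^ 2 - α ^ 2 * Y ^ 2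
          ≤ (α ^ 2 - a * X) ^ 2 := by
        nlinarith [key1 0, mul_nonneg (add_nonneg (sq_nonneg (X - a)) (sq_nonneg Y))
          (sq_nonneg α)]
      have hsle : s ≤ α ^ 2 - a * X := by
        rw [hsdef]
        calc Real.sqrt (α ^ 2 * β ^ 2 - β ^ 2 * X ^ 2 - α ^ 2 * Y ^ 2)
            ≤ Real.sqrt ((α ^ 2 - a * X) ^ 2) := Real.sqrt_le_sqrt hDle
          _ = α ^ 2 - a * X := Real.sqrt_sq (by linarith)
      refine ⟨(a * X + s) / α ^ 2, ?_, z - (((a * ((a * X + s) / α ^ 2) : ℝ)) : ℂ),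
        ?_, by ring⟩
      · have hu1 : (a * X + s) / α ^ 2 ≤ 1 := by
          rw [div_le_one (by positivity)]; linarith
        have hu2 : -1 ≤ (a * X + s) / α ^ 2 := by
          rw [le_div_iff₀ (by positivity)]; linarith
        nlinarith [hu1, hu2]
      · set u := (a * X + s) / α ^ 2 with hudef
        have hueq : u * α ^ 2 = a * X + s := by
          rw [hudef]; field_simp
        have hwre' : (z - (((a * u : ℝ)) : ℂ)).re = X - a * u := by simp [hX]
        have hwim' : (z - (((a * u : ℝ)) : ℂ)).im = Y := by simp [hY]
        rw [sq_abs_re_im, hwre', hwim']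
        have hmain : ((X - a * u) ^ 2 + Y ^ 2) * α ^ 4 = β ^ 2 * (1 - u ^ 2) * α ^ 4 := by
          linear_combination (-2 * X * a * α ^ 2 + X * a * β ^ 2 + X * a ^ 3
            + a ^ 2 * α ^ 2 * u + a ^ 2 * s + α ^ 2 * β ^ 2 * u + β ^ 2 * s) * hueq
            + α ^ 2 * hs2
            + (-2 * X * a * s - X ^ 2 * a ^ 2 + X ^ 2 * α ^ 2 - s ^ 2) * hα2
        have h4 : (α ^ 4 : ℝ) ≠ 0 := by positivity
        exact mul_right_cancel₀ h4 hmain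


private lemma unit_id (v0 v1 u0 u1 x0 x1 y0 y1 : ℂ) (hN : u0*v0 + u1*v1 = 1)
    (hX : y0*x0 + y1*x1 = 1) :
    (v0*y0 + v1*y1)*(u0*x0 + u1*x1) + (-u1*y0 + u0*y1)*(-v1*x0 + v0*x1) = 1 := by
  linear_combination (x0*y0 + x1*y1)*hN + hX

private lemma unit_id2 (v0 v1 u0 u1 c0 c1 d0 d1 : ℂ) (hN : u0*v0 + u1*v1 = 1)
    (hC : d0*c0 + d1*c1 = 1) :
    (u0*d0 - v1*d1)*(v0*c0 - u1*c1) + (u1*d0 + v0*d1)*(v1*c0 + u0*c1) = 1 := by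
  linear_combination (d0*c0 + d1*c1)*hN + hC

private lemma master_id (a00 a01 a10 a11 v0 v1 u0 u1 l1 l2 x0 x1 y0 y1 : ℂ)
    (hN : u0*v0 + u1*v1 = 1)
    (hE0 : a00*v0 + a01*v1 = l1*v0) (hE1 : a10*v0 + a11*v1 = l1*v1)
    (htr : l1 + l2 = a00 + a11) :
    y0*(a00*x0 + a01*x1) + y1*(a10*x0 + a11*x1)
      = l1*((v0*y0 + v1*y1)*(u0*x0 + u1*x1))
        + l2*((-u1*y0 + u0*y1)*(-v1*x0 + v0*x1))
        + (u0*(-a00*u1 + a01*u0) + u1*(-a10*u1 + a11*u0))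
            *((v0*y0 + v1*y1)*(-v1*x0 + v0*x1)) := by
  have hT00 : u0*(a00*v0 + a01*v1) + u1*(a10*v0 + a11*v1) = l1 := by
    linear_combination u0*hE0 + u1*hE1 + l1*hN
  have hg : -v1*(a00*v0 + a01*v1) + v0*(a10*v0 + a11*v1) = 0 := by
    linear_combination (-v1)*hE0 + v0*hE1
  have hmu : -v1*(-a00*u1 + a01*u0) + v0*(-a10*u1 + a11*u0) = l2 := by
    linear_combination (a00 + a11)*hN - hT00 - htr
  linear_combination
    (-(y0*(a00*x0 + a01*x1) + y1*(a10*x0 + a11*x1)))*(u0*v0 + u1*v1 + 1)*hN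
    + ((v0*y0 + v1*y1)*(u0*x0 + u1*x1))*hT00
    + ((-u1*y0 + u0*y1)*(u0*x0 + u1*x1))*hg
    + ((-u1*y0 + u0*y1)*(-v1*x0 + v0*x1))*hmu

lemma ellipse_c (a : ℂ) (β : ℝ) (hβ : 0 ≤ β) (z : ℂ) :
    (∃ u : ℝ, u ^ 2 ≤ 1 ∧ ∃ w : ℂ, ‖w‖ ^ 2 = β ^ 2 * (1 - u ^ 2) ∧
      z = (u : ℂ) * a + w) ↔
    ‖z - a‖ + ‖z + a‖
      ≤ 2 * Real.sqrt (‖a‖ ^ 2 + β ^ 2) := by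
  rcases eq_or_ne a 0 with rfl | ha
  · have := ellipse_real 0 β le_rfl hβ z
    simpa using this
  · have hr : (0:ℝ) < ‖a‖ := by
      simpa [norm_pos_iff] using ha
    set σ : ℂ := (‖a‖ : ℂ) / a with hσ
    have hσa : σ * a = (‖a‖ : ℂ) := by
      rw [hσ]; field_simp
    have hσabs : ‖σ‖ = 1 := by
      rw [hσ, norm_div, Complex.norm_real, Real.norm_eq_abs, abs_of_pos hr, div_self (ne_of_gt hr)]
    have hσne : σ ≠ 0 := by
      intro h0; rw [h0] at hσabs; simp at hσabs
    have main := ellipse_real (‖a‖) β (norm_nonneg a) hβ (σ * z)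
    have e1 : σ * z - (‖a‖ : ℂ) = σ * (z - a) := by
      rw [mul_sub, hσa]
    have e2 : σ * z + (‖a‖ : ℂ) = σ * (z + a) := by
      rw [mul_add, hσa]
    rw [e1, e2, norm_mul, norm_mul, hσabs, one_mul, one_mul] at main
    rw [← main]
    constructor
    · rintro ⟨u, hu, w, hw, hz⟩
      refine ⟨u, hu, σ * w, by rw [norm_mul, hσabs, one_mul]; exact hw, ?_⟩
      push_cast
      linear_combination σ * hz + (u : ℂ) * hσa
    · rintro ⟨u, hu, w, hw, hz⟩
      refine ⟨u, hu, σ⁻¹ * w, ?_, ?_⟩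
      · rw [norm_mul, norm_inv, hσabs]; simpa using hw
      · have hz' : σ * z = (u:ℂ) * (σ * a) + w := by
          push_cast at hz
          linear_combination hz - (u:ℂ) * hσa
        calc z = σ⁻¹ * (σ * z) := by field_simp
          _ = σ⁻¹ * ((u:ℂ) * (σ * a) + w) := by rw [hz']
          _ = (u:ℂ) * a + σ⁻¹ * w := by field_simp


lemma param_ellipse (l1 l2 b z : ℂ) :
    (∃ c0 c1 : ℂ, (starRingEnd ℂ) c0 * c0 + (starRingEnd ℂ) c1 * c1 = 1 ∧
      z = l1 * ((starRingEnd ℂ) c0 * c0) + l2 * ((starRingEnd ℂ) c1 * c1)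
        + b * ((starRingEnd ℂ) c0 * c1)) ↔
    ‖z - l1‖ + ‖z - l2‖
      ≤ Real.sqrt (‖b‖ ^ 2 + ‖l1 - l2‖ ^ 2) := by
  have hβ : (0:ℝ) ≤ ‖b‖ / 2 := by positivity
  have he := ellipse_c ((l1 - l2)/2) (‖b‖ / 2) hβ (z - (l1 + l2)/2)
  have e1 : z - (l1 + l2)/2 - (l1 - l2)/2 = z - l1 := by ring
  have e2 : z - (l1 + l2)/2 + (l1 - l2)/2 = z - l2 := by ring
  have hsq : 2 * Real.sqrt (‖(l1 - l2)/2‖ ^ 2 + (‖b‖ / 2) ^ 2)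
      = Real.sqrt (‖b‖ ^ 2 + ‖l1 - l2‖ ^ 2) := by
    rw [norm_div, Complex.norm_ofNat,
      show (‖l1-l2‖/2)^2 + (‖b‖/2)^2
        = (‖b‖ ^ 2 + ‖l1-l2‖^2) / 4 by ring]
    have h4 : Real.sqrt 4 = 2 := by
      rw [show (4:ℝ) = 2^2 by norm_num, Real.sqrt_sq (by norm_num)]
    rw [← h4, ← Real.sqrt_mul (by norm_num),
      show 4*((‖b‖ ^ 2 + ‖l1-l2‖^2)/4)
        = ‖b‖ ^ 2 + ‖l1-l2‖^2 by ring]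
  rw [e1, e2, hsq] at he
  rw [← he]
  constructor
  · rintro ⟨c0, c1, hunit, hz⟩
    have h0 : (starRingEnd ℂ) c0 * c0 = (Complex.normSq c0 : ℂ) :=
      (Complex.normSq_eq_conj_mul_self).symm
    have h1 : (starRingEnd ℂ) c1 * c1 = (Complex.normSq c1 : ℂ) :=
      (Complex.normSq_eq_conj_mul_self).symm
    rw [h0, h1] at hunit hz
    have hnr : Complex.normSq c0 + Complex.normSq c1 = 1 := by exact_mod_cast hunit
    refine ⟨Complex.normSq c0 - Complex.normSq c1, ?_,
      b * ((starRingEnd ℂ) c0 * c1), ?_, ?_⟩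
    · nlinarith [Complex.normSq_nonneg c0, Complex.normSq_nonneg c1]
    · have habs : ‖b * ((starRingEnd ℂ) c0 * c1)‖ ^ 2
          = ‖b‖ ^ 2 * (Complex.normSq c0 * Complex.normSq c1) := by
        rw [norm_mul, norm_mul, mul_pow, mul_pow, Complex.sq_norm,
          Complex.sq_norm, Complex.sq_norm, Complex.normSq_conj]
      rw [habs]
      linear_combination (‖b‖ ^ 2 / 4
        * (Complex.normSq c0 + Complex.normSq c1 + 1)) * hnr
    · push_cast
      linear_combination hz + ((l1 + l2)/2) * hunit
  · rintro ⟨u, hu, w, hw, hz⟩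
    have hu1 : u ≤ 1 := by nlinarith
    have hu2 : -1 ≤ u := by nlinarith
    have h1u : (0:ℝ) ≤ (1 + u)/2 := by linarith
    have h1u' : (0:ℝ) ≤ (1 - u)/2 := by linarith
    set x0 : ℝ := Real.sqrt ((1 + u)/2) with hx0def
    have hx0sq : x0 ^ 2 = (1 + u)/2 := Real.sq_sqrt h1u
    have hx0nn : 0 ≤ x0 := Real.sqrt_nonneg _
    by_cases hbc : b * (x0 : ℂ) = 0
    · -- degenerate: w = 0
      have hw0 : w = 0 := by
        have habs0 : ‖w‖ ^ 2 = 0 := by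
          rcases mul_eq_zero.mp hbc with hb0 | hc0
          · rw [hw, hb0]; simp
          · have : x0 = 0 := by exact_mod_cast hc0
            have hu' : u = -1 := by nlinarith [hx0sq, this]
            rw [hw, hu']; ring
        have := pow_eq_zero_iff (n := 2) (by norm_num) |>.mp habs0
        simpa using this
      set y0 : ℝ := Real.sqrt ((1 - u)/2) with hy0def
      have hy0sq : y0 ^ 2 = (1 - u)/2 := Real.sq_sqrt h1u'
      refine ⟨(x0 : ℂ), (y0 : ℂ), ?_, ?_⟩
      · rw [Complex.conj_ofReal, Complex.conj_ofReal]
        push_cast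
        rw [show ((x0:ℂ)*x0 + (y0:ℂ)*y0) = ((x0^2 : ℝ) : ℂ) + ((y0^2 : ℝ):ℂ) by
          push_cast; ring]
        rw [hx0sq, hy0sq]; push_cast; ring
      · simp only [Complex.conj_ofReal]
        rw [show ((x0:ℂ)*(x0:ℂ)) = ((x0^2 : ℝ) : ℂ) by push_cast; ring,
          show ((y0:ℂ)*(y0:ℂ)) = ((y0^2 : ℝ) : ℂ) by push_cast; ring,
          hx0sq, hy0sq]
        push_cast
        linear_combination hz + hw0 - (y0:ℂ) * hbc
    · -- nondegenerate
      have hbne : b ≠ 0 := fun h => hbc (by rw [h]; ring)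
      have hx0ne : (x0 : ℂ) ≠ 0 := fun h => hbc (by rw [h]; ring)
      have hx0ne' : x0 ≠ 0 := fun h => hx0ne (by exact_mod_cast h)
      have hx0pos : 0 < x0 := lt_of_le_of_ne hx0nn (Ne.symm hx0ne')
      have h1upos : 0 < (1 + u) := by nlinarith [hx0sq]
      refine ⟨(x0 : ℂ), w / (b * (x0 : ℂ)), ?_, ?_⟩
      · rw [Complex.conj_ofReal]
        have hn1 : (starRingEnd ℂ) (w / (b * (x0:ℂ))) * (w / (b * (x0:ℂ)))
            = (Complex.normSq (w / (b * (x0:ℂ))) : ℂ) :=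
          (Complex.normSq_eq_conj_mul_self).symm
        rw [hn1]
        have hnval : Complex.normSq (w / (b * (x0:ℂ))) = (1 - u)/2 := by
          rw [Complex.normSq_div, Complex.normSq_mul]
          have : Complex.normSq w = ‖w‖ ^ 2 := (Complex.sq_norm w).symm
          rw [this, hw]
          have hb2 : Complex.normSq b = ‖b‖ ^ 2 := (Complex.sq_norm b).symm
          have hx2 : Complex.normSq (x0 : ℂ) = x0 ^ 2 := by
            rw [Complex.normSq_ofReal]; ring
          rw [hb2, hx2, hx0sq]
          have hbabs : ‖b‖ ≠ 0 := by simpa using hbne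
          field_simp
          ring
        rw [hnval]
        rw [show ((x0:ℂ)*(x0:ℂ)) = ((x0^2 : ℝ) : ℂ) by push_cast; ring, hx0sq]
        push_cast; ring
      · rw [Complex.conj_ofReal]
        have hcc : b * ((x0:ℂ) * (w / (b * (x0:ℂ)))) = w := by
          field_simp
        rw [show l1 * ((x0:ℂ)*(x0:ℂ)) = l1 * ((x0^2 : ℝ) : ℂ) by push_cast; ring]
        rw [hx0sq]
        have hn1 : (starRingEnd ℂ) (w / (b * (x0:ℂ))) * (w / (b * (x0:ℂ)))
            = (Complex.normSq (w / (b * (x0:ℂ))) : ℂ) :=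
          (Complex.normSq_eq_conj_mul_self).symm
        rw [hn1]
        have hnval : Complex.normSq (w / (b * (x0:ℂ))) = (1 - u)/2 := by
          rw [Complex.normSq_div, Complex.normSq_mul]
          rw [← Complex.sq_norm w, hw, ← Complex.sq_norm b]
          have hx2 : Complex.normSq (x0 : ℂ) = x0 ^ 2 := by
            rw [Complex.normSq_ofReal]; ring
          have hbabs : ‖b‖ ≠ 0 := by simpa using hbne
          rw [hx2, hx0sq]
          field_simp
          ring
        rw [hnval, hcc]
        push_cast
        linear_combination hz


private lemma inner_expand (M : Matrix (Fin 2) (Fin 2) ℂ) (x : EuclideanSpace ℂ (Fin 2)) :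
    inner (𝕜 := ℂ) x (Matrix.toEuclideanCLM (𝕜 := ℂ) M x)
    = (starRingEnd ℂ) (x 0) * (M 0 0 * x 0 + M 0 1 * x 1)
      + (starRingEnd ℂ) (x 1) * (M 1 0 * x 0 + M 1 1 * x 1) := by
  have h := Matrix.ofLp_toEuclideanCLM (𝕜 := ℂ) (n := Fin 2) M x
  have h0 := congrFun h 0
  have h1 := congrFun h 1
  simp only [Matrix.toLin'_apply, Matrix.mulVec, dotProduct,
    Fin.sum_univ_two] at h0 h1
  simp [PiLp.inner_apply, Fin.sum_univ_two, h0, h1]; ring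

private lemma norm_one_sum {x : EuclideanSpace ℂ (Fin 2)} (h : ‖x‖ = 1) :
    (starRingEnd ℂ) (x 0) * x 0 + (starRingEnd ℂ) (x 1) * x 1 = 1 := by
  have := inner_self_eq_norm_sq_to_K (𝕜 := ℂ) x
  rw [h] at this
  simp only [PiLp.inner_apply, Fin.sum_univ_two, RCLike.inner_apply] at this
  simpa [mul_comm] using this

private lemma sum_norm_one {x : EuclideanSpace ℂ (Fin 2)}
    (h : (starRingEnd ℂ) (x 0) * x 0 + (starRingEnd ℂ) (x 1) * x 1 = 1) : ‖x‖ = 1 := by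
  have hi : (inner ℂ x x : ℂ) = 1 := by
    simpa only [PiLp.inner_apply, Fin.sum_univ_two, RCLike.inner_apply, mul_comm] using h
  have h2 : ‖x‖ ^ 2 = 1 := by
    rw [← inner_self_eq_norm_sq (𝕜 := ℂ) x, hi]
    simp
  nlinarith [norm_nonneg x]

private lemma inner_formula (A : Matrix (Fin 2) (Fin 2) ℂ) (l1 l2 v0 v1 : ℂ)
    (hN : (starRingEnd ℂ) v0 * v0 + (starRingEnd ℂ) v1 * v1 = 1)
    (hE0 : A 0 0 * v0 + A 0 1 * v1 = l1 * v0)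
    (hE1 : A 1 0 * v0 + A 1 1 * v1 = l1 * v1)
    (htr : l1 + l2 = A 0 0 + A 1 1) (x : EuclideanSpace ℂ (Fin 2)) :
    inner (𝕜 := ℂ) x (Matrix.toEuclideanCLM (𝕜 := ℂ) A x)
      = l1 * ((starRingEnd ℂ) ((starRingEnd ℂ) v0 * x 0 + (starRingEnd ℂ) v1 * x 1)
            * ((starRingEnd ℂ) v0 * x 0 + (starRingEnd ℂ) v1 * x 1))
        + l2 * ((starRingEnd ℂ) (-v1 * x 0 + v0 * x 1) * (-v1 * x 0 + v0 * x 1))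
        + ((starRingEnd ℂ) v0 * (-(A 0 0) * (starRingEnd ℂ) v1 + A 0 1 * (starRingEnd ℂ) v0)
           + (starRingEnd ℂ) v1 * (-(A 1 0) * (starRingEnd ℂ) v1 + A 1 1 * (starRingEnd ℂ) v0))
          * ((starRingEnd ℂ) ((starRingEnd ℂ) v0 * x 0 + (starRingEnd ℂ) v1 * x 1)
            * (-v1 * x 0 + v0 * x 1)) := by
  have hT00 : (starRingEnd ℂ) v0 * (A 0 0 * v0 + A 0 1 * v1)
      + (starRingEnd ℂ) v1 * (A 1 0 * v0 + A 1 1 * v1) = l1 := by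
    linear_combination (starRingEnd ℂ) v0 * hE0 + (starRingEnd ℂ) v1 * hE1 + l1 * hN
  have hg : -v1 * (A 0 0 * v0 + A 0 1 * v1) + v0 * (A 1 0 * v0 + A 1 1 * v1) = 0 := by
    linear_combination (-v1) * hE0 + v0 * hE1
  have hmu : -v1 * (-(A 0 0) * (starRingEnd ℂ) v1 + A 0 1 * (starRingEnd ℂ) v0)
      + v0 * (-(A 1 0) * (starRingEnd ℂ) v1 + A 1 1 * (starRingEnd ℂ) v0) = l2 := by
    linear_combination (A 0 0 + A 1 1) * hN - hT00 - htr
  have hd0 : (starRingEnd ℂ) ((starRingEnd ℂ) v0 * x 0 + (starRingEnd ℂ) v1 * x 1)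
      = v0 * (starRingEnd ℂ) (x 0) + v1 * (starRingEnd ℂ) (x 1) := by
    simp [map_add, _root_.map_mul]
  have hd1 : (starRingEnd ℂ) (-v1 * x 0 + v0 * x 1)
      = -((starRingEnd ℂ) v1) * (starRingEnd ℂ) (x 0)
        + (starRingEnd ℂ) v0 * (starRingEnd ℂ) (x 1) := by
    simp [map_add, _root_.map_mul]
  rw [inner_expand A x, hd0, hd1]
  linear_combination
    (-((starRingEnd ℂ) (x 0) * (A 0 0 * x 0 + A 0 1 * x 1)
        + (starRingEnd ℂ) (x 1) * (A 1 0 * x 0 + A 1 1 * x 1)))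
      * ((starRingEnd ℂ) v0 * v0 + (starRingEnd ℂ) v1 * v1 + 1) * hN
    + ((v0 * (starRingEnd ℂ) (x 0) + v1 * (starRingEnd ℂ) (x 1))
        * ((starRingEnd ℂ) v0 * x 0 + (starRingEnd ℂ) v1 * x 1)) * hT00
    + ((-((starRingEnd ℂ) v1) * (starRingEnd ℂ) (x 0)
        + (starRingEnd ℂ) v0 * (starRingEnd ℂ) (x 1))
        * ((starRingEnd ℂ) v0 * x 0 + (starRingEnd ℂ) v1 * x 1)) * hg
    + ((-((starRingEnd ℂ) v1) * (starRingEnd ℂ) (x 0)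
        + (starRingEnd ℂ) v0 * (starRingEnd ℂ) (x 1))
        * (-v1 * x 0 + v0 * x 1)) * hmu

lemma numRange_param (A : Matrix (Fin 2) (Fin 2) ℂ) (l1 l2 v0 v1 : ℂ)
    (hN : (starRingEnd ℂ) v0 * v0 + (starRingEnd ℂ) v1 * v1 = 1)
    (hE0 : A 0 0 * v0 + A 0 1 * v1 = l1 * v0)
    (hE1 : A 1 0 * v0 + A 1 1 * v1 = l1 * v1)
    (htr : l1 + l2 = A 0 0 + A 1 1) :
    numRange A = {z | ∃ c0 c1 : ℂ,
      (starRingEnd ℂ) c0 * c0 + (starRingEnd ℂ) c1 * c1 = 1 ∧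
      z = l1 * ((starRingEnd ℂ) c0 * c0) + l2 * ((starRingEnd ℂ) c1 * c1)
        + ((starRingEnd ℂ) v0 * (-(A 0 0) * (starRingEnd ℂ) v1 + A 0 1 * (starRingEnd ℂ) v0)
           + (starRingEnd ℂ) v1 * (-(A 1 0) * (starRingEnd ℂ) v1 + A 1 1 * (starRingEnd ℂ) v0))
          * ((starRingEnd ℂ) c0 * c1)} := by
  ext z
  simp only [numRange, Set.mem_setOf_eq]
  constructor
  · rintro ⟨x, hx, rfl⟩
    have hX := norm_one_sum hx
    refine ⟨(starRingEnd ℂ) v0 * x 0 + (starRingEnd ℂ) v1 * x 1,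
      -v1 * x 0 + v0 * x 1, ?_, inner_formula A l1 l2 v0 v1 hN hE0 hE1 htr x⟩
    have hd0 : (starRingEnd ℂ) ((starRingEnd ℂ) v0 * x 0 + (starRingEnd ℂ) v1 * x 1)
        = v0 * (starRingEnd ℂ) (x 0) + v1 * (starRingEnd ℂ) (x 1) := by
      simp [map_add, _root_.map_mul]
    have hd1 : (starRingEnd ℂ) (-v1 * x 0 + v0 * x 1)
        = -((starRingEnd ℂ) v1) * (starRingEnd ℂ) (x 0)
          + (starRingEnd ℂ) v0 * (starRingEnd ℂ) (x 1) := by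
      simp [map_add, _root_.map_mul]
    rw [hd0, hd1]
    linear_combination (x 0 * (starRingEnd ℂ) (x 0) + x 1 * (starRingEnd ℂ) (x 1)) * hN + hX
  · rintro ⟨c0, c1, hunit, hzeq⟩
    set x : EuclideanSpace ℂ (Fin 2) := (WithLp.equiv 2 (Fin 2 → ℂ)).symm
      ![v0 * c0 - (starRingEnd ℂ) v1 * c1, v1 * c0 + (starRingEnd ℂ) v0 * c1] with hxdef
    have hx0 : x 0 = v0 * c0 - (starRingEnd ℂ) v1 * c1 := by
      rw [hxdef]; simp
    have hx1 : x 1 = v1 * c0 + (starRingEnd ℂ) v0 * c1 := by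
      rw [hxdef]; simp
    have hC0 : (starRingEnd ℂ) v0 * x 0 + (starRingEnd ℂ) v1 * x 1 = c0 := by
      rw [hx0, hx1]; linear_combination c0 * hN
    have hC1 : -v1 * x 0 + v0 * x 1 = c1 := by
      rw [hx0, hx1]; linear_combination c1 * hN
    have hXsum : (starRingEnd ℂ) (x 0) * x 0 + (starRingEnd ℂ) (x 1) * x 1 = 1 := by
      have hy0 : (starRingEnd ℂ) (x 0)
          = (starRingEnd ℂ) v0 * (starRingEnd ℂ) c0 - v1 * (starRingEnd ℂ) c1 := by
        rw [hx0]; simp [map_sub, _root_.map_mul]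
      have hy1 : (starRingEnd ℂ) (x 1)
          = (starRingEnd ℂ) v1 * (starRingEnd ℂ) c0 + v0 * (starRingEnd ℂ) c1 := by
        rw [hx1]; simp [map_add, _root_.map_mul]
      rw [hy0, hy1, hx0, hx1]
      linear_combination ((starRingEnd ℂ) c0 * c0 + (starRingEnd ℂ) c1 * c1) * hN + hunit
    refine ⟨x, sum_norm_one hXsum, ?_⟩
    rw [inner_formula A l1 l2 v0 v1 hN hE0 hE1 htr x, hC0, hC1, hzeq]

private lemma eig_exists (A : Matrix (Fin 2) (Fin 2) ℂ) (l1 l2 : ℂ)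
    (htr : l1 + l2 = A 0 0 + A 1 1) (hdet : l1 * l2 = A 0 0 * A 1 1 - A 0 1 * A 1 0) :
    ∃ v0 v1 : ℂ, ¬(v0 = 0 ∧ v1 = 0) ∧ A 0 0 * v0 + A 0 1 * v1 = l1 * v0
      ∧ A 1 0 * v0 + A 1 1 * v1 = l1 * v1 := by
  have hd : (A - l1 • 1).det = 0 := by
    rw [Matrix.det_fin_two]
    simp only [Matrix.sub_apply, Matrix.smul_apply, Matrix.one_apply, smul_eq_mul]
    norm_num
    linear_combination -hdet + l1 * htr
  obtain ⟨v, hv, hmv⟩ := (Matrix.exists_mulVec_eq_zero_iff).mpr hd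
  refine ⟨v 0, v 1, ?_, ?_, ?_⟩
  · intro ⟨h0, h1⟩
    apply hv
    funext i
    fin_cases i <;> simp [h0, h1]
  · have := congrFun hmv 0
    simp only [Matrix.mulVec, dotProduct, Fin.sum_univ_two, Matrix.sub_apply,
      Matrix.smul_apply, Matrix.one_apply, smul_eq_mul, Pi.zero_apply] at this
    norm_num at this
    linear_combination this
  · have := congrFun hmv 1
    simp only [Matrix.mulVec, dotProduct, Fin.sum_univ_two, Matrix.sub_apply,
      Matrix.smul_apply, Matrix.one_apply, smul_eq_mul, Pi.zero_apply] at this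
    norm_num at this
    linear_combination this

private lemma trace_expand (A : Matrix (Fin 2) (Fin 2) ℂ) :
    Matrix.trace (Aᴴ * A) = (starRingEnd ℂ) (A 0 0) * A 0 0 + (starRingEnd ℂ) (A 0 1) * A 0 1
      + (starRingEnd ℂ) (A 1 0) * A 1 0 + (starRingEnd ℂ) (A 1 1) * A 1 1 := by
  simp only [Matrix.trace_fin_two, Matrix.mul_apply, Matrix.conjTranspose_apply,
    Fin.sum_univ_two, Complex.star_def]
  ring

private lemma frobenius_id (a00 a01 a10 a11 b00 b01 b10 b11 v0 v1 u0 u1 l1 l2 k1 k2 : ℂ)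
    (hN : u0*v0 + u1*v1 = 1)
    (hE0 : a00*v0 + a01*v1 = l1*v0) (hE1 : a10*v0 + a11*v1 = l1*v1)
    (hF0 : b00*u0 + b01*u1 = k1*u0) (hF1 : b10*u0 + b11*u1 = k1*u1)
    (htr : l1 + l2 = a00 + a11) (htrc : k1 + k2 = b00 + b11) :
    a00*b00 + a01*b01 + a10*b10 + a11*b11
      = l1*k1 + l2*k2
        + (u0*(-a00*u1 + a01*u0) + u1*(-a10*u1 + a11*u0))
          * (v0*(-b00*v1 + b01*v0) + v1*(-b10*v1 + b11*v0)) := by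
  have hT00 : u0*(a00*v0 + a01*v1) + u1*(a10*v0 + a11*v1) = l1 := by
    linear_combination u0*hE0 + u1*hE1 + l1*hN
  have hg : -v1*(a00*v0 + a01*v1) + v0*(a10*v0 + a11*v1) = 0 := by
    linear_combination (-v1)*hE0 + v0*hE1
  have hmu : -v1*(-a00*u1 + a01*u0) + v0*(-a10*u1 + a11*u0) = l2 := by
    linear_combination (a00 + a11)*hN - hT00 - htr
  have hT00c : v0*(b00*u0 + b01*u1) + v1*(b10*u0 + b11*u1) = k1 := by
    linear_combination v0*hF0 + v1*hF1 + k1*hN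
  have hgc : -u1*(b00*u0 + b01*u1) + u0*(b10*u0 + b11*u1) = 0 := by
    linear_combination (-u1)*hF0 + u0*hF1
  have hmuc : -u1*(-b00*v1 + b01*v0) + u0*(-b10*v1 + b11*v0) = k2 := by
    linear_combination (b00 + b11)*hN - hT00c - htrc
  have hPar : (u0*(a00*v0 + a01*v1) + u1*(a10*v0 + a11*v1))
        * (v0*(b00*u0 + b01*u1) + v1*(b10*u0 + b11*u1))
      + (u0*(-a00*u1 + a01*u0) + u1*(-a10*u1 + a11*u0))
        * (v0*(-b00*v1 + b01*v0) + v1*(-b10*v1 + b11*v0))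
      + (-v1*(a00*v0 + a01*v1) + v0*(a10*v0 + a11*v1))
        * (-u1*(b00*u0 + b01*u1) + u0*(b10*u0 + b11*u1))
      + (-v1*(-a00*u1 + a01*u0) + v0*(-a10*u1 + a11*u0))
        * (-u1*(-b00*v1 + b01*v0) + u0*(-b10*v1 + b11*v0))
      = a00*b00 + a01*b01 + a10*b10 + a11*b11 := by
    linear_combination (a00*b00 + a01*b01 + a10*b10 + a11*b11)*(u0*v0 + u1*v1 + 1)*hN
  linear_combination (-1 : ℂ)*hPar
    + (v0*(b00*u0 + b01*u1) + v1*(b10*u0 + b11*u1))*hT00 + l1*hT00c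
    + (-u1*(b00*u0 + b01*u1) + u0*(b10*u0 + b11*u1))*hg
    + (-u1*(-b00*v1 + b01*v0) + u0*(-b10*v1 + b11*v0))*hmu + l2*hmuc


/-- The elliptical range theorem: the numerical range of a `2 × 2` matrix `A` with
eigenvalues `λ₁, λ₂` is the closed elliptical disk with foci `λ₁, λ₂` and minor axis
of length `√(tr(AᴴA) − |λ₁|² − |λ₂|²)` (equivalently, major axis of length
`√(minor² + |λ₁ − λ₂|²)`), possibly degenerate. -/
theorem stmt_11 (A : Matrix (Fin 2) (Fin 2) ℂ) (lam₁ lam₂ : ℂ)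
    (htr : lam₁ + lam₂ = Matrix.trace A) (hdet : lam₁ * lam₂ = Matrix.det A)
    (m : ℝ)
    (hm : m = Real.sqrt ((Matrix.trace (Aᴴ * A)).re
      - ‖lam₁‖ ^ 2 - ‖lam₂‖ ^ 2)) :
    numRange A = {z : ℂ | ‖z - lam₁‖ + ‖z - lam₂‖
      ≤ Real.sqrt (m ^ 2 + ‖lam₁ - lam₂‖ ^ 2)} := by
  have htr' : lam₁ + lam₂ = A 0 0 + A 1 1 := by rw [htr, Matrix.trace_fin_two]
  have hdet' : lam₁ * lam₂ = A 0 0 * A 1 1 - A 0 1 * A 1 0 := by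
    rw [hdet, Matrix.det_fin_two]
  obtain ⟨v0, v1, hvne, hE0, hE1⟩ := eig_exists A lam₁ lam₂ htr' hdet'
  -- normalize the eigenvector
  have hSpos : 0 < Complex.normSq v0 + Complex.normSq v1 := by
    rcases not_and_or.mp hvne with h | h
    · have := Complex.normSq_pos.mpr h
      linarith [Complex.normSq_nonneg v1]
    · have := Complex.normSq_pos.mpr h
      linarith [Complex.normSq_nonneg v0]
  set n : ℝ := Real.sqrt (Complex.normSq v0 + Complex.normSq v1) with hndef
  have hnpos : 0 < n := Real.sqrt_pos.mpr hSpos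
  have hn2 : n ^ 2 = Complex.normSq v0 + Complex.normSq v1 := Real.sq_sqrt hSpos.le
  have hnne : (n : ℂ) ≠ 0 := by
    simp only [ne_eq, Complex.ofReal_eq_zero]
    exact ne_of_gt hnpos
  set W0 : ℂ := v0 / (n : ℂ) with hW0
  set W1 : ℂ := v1 / (n : ℂ) with hW1
  have hNw : (starRingEnd ℂ) W0 * W0 + (starRingEnd ℂ) W1 * W1 = 1 := by
    rw [hW0, hW1, map_div₀, map_div₀, Complex.conj_ofReal]
    rw [div_mul_div_comm, div_mul_div_comm, ← add_div]
    rw [← Complex.normSq_eq_conj_mul_self, ← Complex.normSq_eq_conj_mul_self]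
    rw [div_eq_one_iff_eq (by simpa using pow_ne_zero 2 hnne)]
    rw [show ((n:ℂ))*(n:ℂ) = ((n^2 : ℝ) : ℂ) by push_cast; ring, hn2]
    push_cast
    ring
  have hE0w : A 0 0 * W0 + A 0 1 * W1 = lam₁ * W0 := by
    rw [hW0, hW1]
    field_simp
    linear_combination hE0
  have hE1w : A 1 0 * W0 + A 1 1 * W1 = lam₁ * W1 := by
    rw [hW0, hW1]
    field_simp
    linear_combination hE1
  -- conjugated hypotheses
  have hE0c : (starRingEnd ℂ) (A 0 0) * (starRingEnd ℂ) W0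
      + (starRingEnd ℂ) (A 0 1) * (starRingEnd ℂ) W1
      = (starRingEnd ℂ) lam₁ * (starRingEnd ℂ) W0 := by
    have := congrArg (starRingEnd ℂ) hE0w
    simpa [map_add, _root_.map_mul] using this
  have hE1c : (starRingEnd ℂ) (A 1 0) * (starRingEnd ℂ) W0
      + (starRingEnd ℂ) (A 1 1) * (starRingEnd ℂ) W1
      = (starRingEnd ℂ) lam₁ * (starRingEnd ℂ) W1 := by
    have := congrArg (starRingEnd ℂ) hE1w
    simpa [map_add, _root_.map_mul] using this
  have htrc : (starRingEnd ℂ) lam₁ + (starRingEnd ℂ) lam₂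
      = (starRingEnd ℂ) (A 0 0) + (starRingEnd ℂ) (A 1 1) := by
    have := congrArg (starRingEnd ℂ) htr'
    simpa [map_add] using this
  -- Frobenius computation : trace (Aᴴ A) = |λ₁|² + |λ₂|² + |b|²
  have hfro := frobenius_id (A 0 0) (A 0 1) (A 1 0) (A 1 1)
    ((starRingEnd ℂ) (A 0 0)) ((starRingEnd ℂ) (A 0 1)) ((starRingEnd ℂ) (A 1 0))
    ((starRingEnd ℂ) (A 1 1)) W0 W1 ((starRingEnd ℂ) W0) ((starRingEnd ℂ) W1)
    lam₁ lam₂ ((starRingEnd ℂ) lam₁) ((starRingEnd ℂ) lam₂)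
    hNw hE0w hE1w hE0c hE1c htr' htrc
  have hcb : (starRingEnd ℂ) (((starRingEnd ℂ) W0 * (-(A 0 0) * (starRingEnd ℂ) W1 + A 0 1 * (starRingEnd ℂ) W0) + (starRingEnd ℂ) W1 * (-(A 1 0) * (starRingEnd ℂ) W1 + A 1 1 * (starRingEnd ℂ) W0)))
      = W0*(-((starRingEnd ℂ) (A 0 0))*W1 + (starRingEnd ℂ) (A 0 1)*W0)
        + W1*(-((starRingEnd ℂ) (A 1 0))*W1 + (starRingEnd ℂ) (A 1 1)*W0) := by
    simp [map_add, _root_.map_mul, map_neg]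
  have h5 : Matrix.trace (Aᴴ * A)
      = ((Complex.normSq lam₁ + Complex.normSq lam₂ + Complex.normSq (((starRingEnd ℂ) W0 * (-(A 0 0) * (starRingEnd ℂ) W1 + A 0 1 * (starRingEnd ℂ) W0) + (starRingEnd ℂ) W1 * (-(A 1 0) * (starRingEnd ℂ) W1 + A 1 1 * (starRingEnd ℂ) W0))) : ℝ) : ℂ) := by
    rw [trace_expand A]
    push_cast
    rw [Complex.normSq_eq_conj_mul_self, Complex.normSq_eq_conj_mul_self,
      Complex.normSq_eq_conj_mul_self]
    rw [hcb]
    linear_combination hfro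
  have htrace_re : (Matrix.trace (Aᴴ * A)).re
      = Complex.normSq lam₁ + Complex.normSq lam₂ + Complex.normSq (((starRingEnd ℂ) W0 * (-(A 0 0) * (starRingEnd ℂ) W1 + A 0 1 * (starRingEnd ℂ) W0) + (starRingEnd ℂ) W1 * (-(A 1 0) * (starRingEnd ℂ) W1 + A 1 1 * (starRingEnd ℂ) W0))) := by
    rw [h5, Complex.ofReal_re]
  have hmval : m = ‖((starRingEnd ℂ) W0 * (-(A 0 0) * (starRingEnd ℂ) W1 + A 0 1 * (starRingEnd ℂ) W0) + (starRingEnd ℂ) W1 * (-(A 1 0) * (starRingEnd ℂ) W1 + A 1 1 * (starRingEnd ℂ) W0))‖ := by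
    rw [hm, htrace_re, Complex.sq_norm, Complex.sq_norm]
    rw [show Complex.normSq lam₁ + Complex.normSq lam₂ + Complex.normSq (((starRingEnd ℂ) W0 * (-(A 0 0) * (starRingEnd ℂ) W1 + A 0 1 * (starRingEnd ℂ) W0) + (starRingEnd ℂ) W1 * (-(A 1 0) * (starRingEnd ℂ) W1 + A 1 1 * (starRingEnd ℂ) W0)))
        - Complex.normSq lam₁ - Complex.normSq lam₂ = Complex.normSq (((starRingEnd ℂ) W0 * (-(A 0 0) * (starRingEnd ℂ) W1 + A 0 1 * (starRingEnd ℂ) W0) + (starRingEnd ℂ) W1 * (-(A 1 0) * (starRingEnd ℂ) W1 + A 1 1 * (starRingEnd ℂ) W0))) by ring]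
    rw [Complex.norm_def]
  -- main chain
  rw [numRange_param A lam₁ lam₂ W0 W1 hNw hE0w hE1w htr']
  ext z
  simp only [Set.mem_setOf_eq]
  rw [param_ellipse lam₁ lam₂ (((starRingEnd ℂ) W0 * (-(A 0 0) * (starRingEnd ℂ) W1 + A 0 1 * (starRingEnd ℂ) W0) + (starRingEnd ℂ) W1 * (-(A 1 0) * (starRingEnd ℂ) W1 + A 1 1 * (starRingEnd ℂ) W0))) z, hmval]
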